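/- For every n ≥ 1, B_n^+(x) = 2(n−1)x · B_{n−1}^+(x) + 2x(1−x) · (d/dx) B_{n−1}^+(x) + B_{n−1}(x). -/

import Mathlib

open Polynomial Finset

/-- A signed permutation of `[n]`, encoded by its word: position `i` (0-indexed)
holds the pair (absolute value minus one, sign) of the letter `w(a_{i+1})`. -/
def IsSP {n : ℕ} (u : Fin n → Fin n × Bool) : Prop :=
  Function.Bijective fun i => (u i).1

instance {n : ℕ} (u : Fin n → Fin n × Bool) : Decidable (IsSP u) :=
  inferInstanceAs (Decidable (Function.Bijective _))

/-- the letter `w(a_{i+1})` at position `i` of the word -/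
def letterW {n : ℕ} (u : Fin n → Fin n × Bool) (i : Fin n) : ℤ :=
  if (u i).2 then ((u i).1 : ℤ) + 1 else -(((u i).1 : ℤ) + 1)

/-- `a_{k+1}`: the element of the domain `S` with absolute value `k+1` -/
def aVal {n : ℕ} (u : Fin n → Fin n × Bool) (k : Fin n) : ℤ :=
  if ∃ j, u j = (k, true) then ((k : ℤ) + 1) else -((k : ℤ) + 1)

/-- the number of type `B` excedances -/
def excB {n : ℕ} (u : Fin n → Fin n × Bool) : ℕ :=
  (univ.filter fun k : Fin n =>
    aVal u k < letterW u k ∨ (aVal u k < 0 ∧ letterW u k = aVal u k)).card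

/-- a derangement: no positive fixed point -/
def IsDerB {n : ℕ} (u : Fin n → Fin n × Bool) : Prop :=
  ∀ k : Fin n, 0 < aVal u k → letterW u k ≠ aVal u k

instance {n : ℕ} (u : Fin n → Fin n × Bool) : Decidable (IsDerB u) := by
  unfold IsDerB; infer_instance

/-- the type `B` derangement polynomial -/
noncomputable def dB (n : ℕ) : Polynomial ℝ :=
  ∑ u ∈ univ.filter (fun u : Fin n → Fin n × Bool => IsSP u ∧ IsDerB u), X ^ excB u

/-- the number of type `B` descents -/
def desB {n : ℕ} (u : Fin n → Fin n × Bool) : ℕ :=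
  (univ.filter fun i : Fin n =>
    ((i : ℕ) = 0 ∧ letterW u i < 0) ∨
    (0 < (i : ℕ) ∧ letterW u i < letterW u ⟨(i : ℕ) - 1, by have := i.isLt; omega⟩)).card

/-- the type `B` Eulerian polynomial -/
noncomputable def Bpoly (n : ℕ) : Polynomial ℝ :=
  ∑ u ∈ univ.filter (fun u : Fin n → Fin n × Bool => IsSP u), X ^ desB u

/-- the "positive half" type `B` Eulerian polynomial -/
noncomputable def Bplus : ℕ → Polynomial ℝ
  | 0 => 1
  | n + 1 =>
    ∑ u ∈ univ.filter (fun u : Fin (n + 1) → Fin (n + 1) × Bool =>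
        IsSP u ∧ 0 < letterW u (Fin.last n)), X ^ desB u

/-- the "negative half" type `B` Eulerian polynomial -/
noncomputable def Bminus : ℕ → Polynomial ℝ
  | 0 => 0
  | n + 1 =>
    ∑ u ∈ univ.filter (fun u : Fin (n + 1) → Fin (n + 1) × Bool =>
        IsSP u ∧ letterW u (Fin.last n) < 0), X ^ desB u

/-- the number of excedances of a permutation -/
def excA {n : ℕ} (w : Equiv.Perm (Fin n)) : ℕ :=
  (univ.filter fun i : Fin n => i < w i).card

/-- the number of descents of a permutation -/
def desA {n : ℕ} (w : Equiv.Perm (Fin n)) : ℕ :=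
  (univ.filter fun i : Fin n =>
    (i : ℕ) + 1 < n ∧ w ⟨((i : ℕ) + 1) % n, Nat.mod_lt _ i.pos⟩ < w i).card

/-- the (type `A`) derangement polynomial -/
noncomputable def dA (n : ℕ) : Polynomial ℝ :=
  ∑ w ∈ univ.filter (fun w : Equiv.Perm (Fin n) => ∀ i, w i ≠ i), X ^ excA w

/-- the Eulerian polynomial, with the convention `A_0 = 0` -/
noncomputable def Apoly (n : ℕ) : Polynomial ℝ :=
  if n = 0 then 0 else ∑ w : Equiv.Perm (Fin n), X ^ desA w

-- AUX START
section Aux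
variable {m : ℕ}

/-- previous letter, with sentinel 0 -/
def prevL {n : ℕ} (u : Fin n → Fin n × Bool) (i : Fin n) : ℤ :=
  if (i : ℕ) = 0 then 0 else letterW u ⟨(i : ℕ) - 1, by have := i.isLt; omega⟩

lemma letterW_lt_bound {n : ℕ} (u : Fin n → Fin n × Bool) (i : Fin n) :
    letterW u i < (n : ℤ) + 1 ∧ -((n : ℤ) + 1) < letterW u i := by
  unfold letterW
  split <;> omega

lemma letterW_pos_iff {n : ℕ} (u : Fin n → Fin n × Bool) (i : Fin n) :
    0 < letterW u i ↔ (u i).2 = true := by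
  unfold letterW
  rcases (u i).2 with _ | _ <;> simp <;> omega

lemma desB_eq_card {n : ℕ} (u : Fin n → Fin n × Bool) :
    desB u = (univ.filter fun i : Fin n => letterW u i < prevL u i).card := by
  rw [desB]
  congr 1
  apply filter_congr
  intro i _
  rcases Nat.eq_zero_or_pos i.val with h | h
  · rw [prevL, if_pos h]
    simp [h]
  · rw [prevL, if_neg (by omega)]
    constructor
    · rintro (⟨h0, _⟩ | ⟨_, hA⟩)
      · omega
      · exact hA
    · intro hA
      exact Or.inr ⟨h, hA⟩

lemma desB_le {n : ℕ} (u : Fin n → Fin n × Bool) : desB u ≤ n := by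
  rw [desB_eq_card]
  exact le_trans (card_filter_le _ _) (by simp)


/-- insert the letter `±(m+1)` (sign `b`) at position `p` -/
def insW (v : Fin m → Fin m × Bool) (p : Fin (m + 1)) (b : Bool) (j : Fin (m + 1)) :
    Fin (m + 1) × Bool :=
  if h : (j : ℕ) < (p : ℕ) then
    ((v ⟨j, by have := p.isLt; omega⟩).1.castSucc, (v ⟨j, by have := p.isLt; omega⟩).2)
  else if h2 : (j : ℕ) = (p : ℕ) then (Fin.last m, b)
  else
    ((v ⟨(j : ℕ) - 1, by have := j.isLt; omega⟩).1.castSucc,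
      (v ⟨(j : ℕ) - 1, by have := j.isLt; omega⟩).2)

/-- delete the letter at position `p` -/
def delW (u : Fin (m + 1) → Fin (m + 1) × Bool) (p : Fin (m + 1)) (i : Fin m) :
    Fin m × Bool :=
  ((⟨((u (if (i : ℕ) < (p : ℕ) then i.castSucc else i.succ)).1 : ℕ) % m,
      Nat.mod_lt _ i.pos⟩ : Fin m),
    (u (if (i : ℕ) < (p : ℕ) then i.castSucc else i.succ)).2)

lemma insW_apply_lt (v : Fin m → Fin m × Bool) (p : Fin (m + 1)) (b : Bool)
    (j : Fin (m + 1)) (h : (j : ℕ) < (p : ℕ)) (h' : (j : ℕ) < m) :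
    insW v p b j = ((v ⟨j, h'⟩).1.castSucc, (v ⟨j, h'⟩).2) := by
  unfold insW; rw [dif_pos h]

lemma insW_apply_eq (v : Fin m → Fin m × Bool) (p : Fin (m + 1)) (b : Bool) :
    insW v p b p = (Fin.last m, b) := by
  unfold insW; rw [dif_neg (lt_irrefl _), dif_pos rfl]

lemma insW_apply_gt (v : Fin m → Fin m × Bool) (p : Fin (m + 1)) (b : Bool)
    (j : Fin (m + 1)) (h : (p : ℕ) < (j : ℕ)) (h' : (j : ℕ) - 1 < m) :
    insW v p b j = ((v ⟨(j : ℕ) - 1, h'⟩).1.castSucc, (v ⟨(j : ℕ) - 1, h'⟩).2) := by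
  unfold insW; rw [dif_neg (by omega), dif_neg (by omega)]

lemma letterW_insW_lt (v : Fin m → Fin m × Bool) (p : Fin (m + 1)) (b : Bool)
    (j : Fin (m + 1)) (h : (j : ℕ) < (p : ℕ)) (h' : (j : ℕ) < m) :
    letterW (insW v p b) j = letterW v ⟨j, h'⟩ := by
  unfold letterW; rw [insW_apply_lt v p b j h h']; simp

lemma letterW_insW_eq (v : Fin m → Fin m × Bool) (p : Fin (m + 1)) (b : Bool) :
    letterW (insW v p b) p = if b then ((m : ℤ) + 1) else -((m : ℤ) + 1) := by
  unfold letterW; rw [insW_apply_eq]; simp [Fin.last]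

lemma letterW_insW_gt (v : Fin m → Fin m × Bool) (p : Fin (m + 1)) (b : Bool)
    (j : Fin (m + 1)) (h : (p : ℕ) < (j : ℕ)) (h' : (j : ℕ) - 1 < m) :
    letterW (insW v p b) j = letterW v ⟨(j : ℕ) - 1, h'⟩ := by
  unfold letterW; rw [insW_apply_gt v p b j h h']; simp

lemma insW_succAbove (v : Fin m → Fin m × Bool) (p : Fin (m + 1)) (b : Bool)
    (i : Fin m) :
    insW v p b (p.succAbove i) = ((v i).1.castSucc, (v i).2) := by
  rcases lt_or_ge (Fin.castSucc i) p with h | h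
  · rw [Fin.succAbove_of_castSucc_lt _ _ h,
      insW_apply_lt v p b _ (by exact_mod_cast h) (by simpa using i.isLt)]
    simp
  · have h' : (p : ℕ) ≤ (i : ℕ) := by simpa [Fin.le_def] using h
    rw [Fin.succAbove_of_le_castSucc _ _ h,
      insW_apply_gt v p b _ (by simp only [Fin.val_succ, Fin.coe_castSucc]; omega)
        (by simp [Fin.val_succ])]
    simp

lemma IsSP_insW {v : Fin m → Fin m × Bool} (hv : IsSP v) (p : Fin (m + 1)) (b : Bool) :
    IsSP (insW v p b) := by
  rw [IsSP, Fintype.bijective_iff_injective_and_card]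
  refine ⟨?_, rfl⟩
  intro j1 j2 hj
  simp only at hj
  by_cases e1 : j1 = p <;> by_cases e2 : j2 = p
  · rw [e1, e2]
  · obtain ⟨i2, rfl⟩ := Fin.exists_succAbove_eq e2
    rw [e1, insW_apply_eq, insW_succAbove] at hj
    simp only at hj
    exact absurd hj.symm (Fin.castSucc_lt_last _).ne
  · obtain ⟨i1, rfl⟩ := Fin.exists_succAbove_eq e1
    rw [e2, insW_apply_eq, insW_succAbove] at hj
    simp only at hj
    exact absurd hj (Fin.castSucc_lt_last _).ne
  · obtain ⟨i1, rfl⟩ := Fin.exists_succAbove_eq e1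
    obtain ⟨i2, rfl⟩ := Fin.exists_succAbove_eq e2
    rw [insW_succAbove, insW_succAbove] at hj
    simp only at hj
    have : i1 = i2 := hv.injective (Fin.castSucc_inj.mp hj)
    rw [this]

lemma delW_eq_succAbove (u : Fin (m + 1) → Fin (m + 1) × Bool) (p : Fin (m + 1)) (i : Fin m) :
    delW u p i = (⟨((u (p.succAbove i)).1 : ℕ) % m, Nat.mod_lt _ i.pos⟩,
      (u (p.succAbove i)).2) := by
  have key : (if (i : ℕ) < (p : ℕ) then (i.castSucc : Fin (m + 1)) else i.succ)
      = p.succAbove i := by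
    rcases lt_or_ge (Fin.castSucc i) p with h | h
    · rw [Fin.succAbove_of_castSucc_lt _ _ h, if_pos (by exact_mod_cast h)]
    · rw [Fin.succAbove_of_le_castSucc _ _ h,
        if_neg (by rw [Fin.le_def] at h; simp at h; omega)]
  unfold delW
  simp only [key]

lemma fst_ne_last {u : Fin (m + 1) → Fin (m + 1) × Bool}
    (hinj : Function.Injective fun j => (u j).1) {p : Fin (m + 1)}
    (hp : (u p).1 = Fin.last m) {j : Fin (m + 1)} (hj : j ≠ p) : ((u j).1 : ℕ) < m := by
  have h1 : (u j).1 ≠ Fin.last m := fun h => hj (hinj (h.trans hp.symm))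
  have h2 := (u j).1.isLt
  have h3 : ((u j).1 : ℕ) ≠ m := fun h => h1 (Fin.ext (by simpa [Fin.val_last] using h))
  omega

lemma IsSP_delW {u : Fin (m + 1) → Fin (m + 1) × Bool} (hu : IsSP u) {p : Fin (m + 1)}
    (hp : (u p).1 = Fin.last m) : IsSP (delW u p) := by
  rw [IsSP, Fintype.bijective_iff_injective_and_card]
  refine ⟨?_, rfl⟩
  intro i1 i2 hj
  simp only [delW_eq_succAbove] at hj
  have b1 := fst_ne_last hu.injective hp (Fin.succAbove_ne p i1)
  have b2 := fst_ne_last hu.injective hp (Fin.succAbove_ne p i2)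
  have hval : ((u (p.succAbove i1)).1 : ℕ) = ((u (p.succAbove i2)).1 : ℕ) := by
    have := congrArg Fin.val hj
    simpa [Nat.mod_eq_of_lt b1, Nat.mod_eq_of_lt b2] using this
  have : p.succAbove i1 = p.succAbove i2 := hu.injective (Fin.ext hval)
  exact Fin.succAbove_right_injective this

lemma delW_insW (v : Fin m → Fin m × Bool) (p : Fin (m + 1)) (b : Bool) :
    delW (insW v p b) p = v := by
  funext i
  rw [delW_eq_succAbove, insW_succAbove]
  refine Prod.ext (Fin.ext ?_) rfl
  simp [Nat.mod_eq_of_lt (v i).1.isLt]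

lemma insW_delW {u : Fin (m + 1) → Fin (m + 1) × Bool}
    (hinj : Function.Injective fun j => (u j).1) {p : Fin (m + 1)}
    (hp : (u p).1 = Fin.last m) :
    insW (delW u p) p (u p).2 = u := by
  funext j
  by_cases hj : j = p
  · rw [hj, insW_apply_eq]
    exact Prod.ext hp.symm rfl
  · obtain ⟨i, rfl⟩ := Fin.exists_succAbove_eq hj
    rw [insW_succAbove, delW_eq_succAbove]
    have hb := fst_ne_last hinj hp (Fin.succAbove_ne p i)
    refine Prod.ext (Fin.ext ?_) rfl
    simp [Nat.mod_eq_of_lt hb]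

lemma descent_iff_insW_low (v : Fin m → Fin m × Bool) (p : Fin (m + 1)) (b : Bool)
    (i : Fin m) (hip : (i : ℕ) < (p : ℕ)) :
    (letterW (insW v p b) i.castSucc < prevL (insW v p b) i.castSucc ↔
      letterW v i < prevL v i) := by
  have h1 : letterW (insW v p b) i.castSucc = letterW v i := by
    rw [letterW_insW_lt v p b _ (by simpa using hip) (by simpa using i.isLt)]
    all_goals exact congrArg _ (Fin.ext (by simp))
  have h2 : prevL (insW v p b) i.castSucc = prevL v i := by
    unfold prevL
    rcases Nat.eq_zero_or_pos (i : ℕ) with h | h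
    · rw [if_pos (by simpa using h), if_pos h]
    · rw [if_neg (by simp; omega), if_neg (by omega)]
      rw [letterW_insW_lt v p b _ (by simp; omega) (by simp; omega)]
      all_goals exact congrArg _ (Fin.ext (by simp))
  rw [h1, h2]

lemma desB_insW_last (v : Fin m → Fin m × Bool) :
    desB (insW v (Fin.last m) true) = desB v := by
  have hvb : ∀ i : Fin m, letterW v i < (m : ℤ) + 1 := fun i => (letterW_lt_bound v i).1
  rw [desB_eq_card, desB_eq_card, Finset.card_filter, Finset.card_filter,
    Fin.sum_univ_succAbove _ (Fin.last m)]
  have h0 : ¬ (letterW (insW v (Fin.last m) true) (Fin.last m) <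
      prevL (insW v (Fin.last m) true) (Fin.last m)) := by
    rw [letterW_insW_eq, if_pos rfl]
    unfold prevL
    rcases Nat.eq_zero_or_pos m with hm | hm
    · rw [if_pos (by simp [Fin.val_last, hm])]
      push_cast
      omega
    · rw [if_neg (by simp [Fin.val_last]; omega)]
      rw [letterW_insW_lt v _ _ _ (by simp [Fin.val_last]; omega)
        (by simp [Fin.val_last]; omega)]
      exact fun hcon => absurd hcon (not_lt.mpr (hvb _).le)
  rw [if_neg h0, zero_add]
  apply Finset.sum_congr rfl
  intro i _
  rw [Fin.succAbove_last]
  simp only [descent_iff_insW_low v (Fin.last m) true i (by simp [Fin.val_last, i.isLt])]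

lemma desB_insW_mid (v : Fin m → Fin m × Bool) (q : Fin m) (b : Bool) :
    desB (insW v q.castSucc b) = desB v + (if letterW v q < prevL v q then 0 else 1) := by
  have hq := q.isLt
  have hvb := fun i : Fin m => letterW_lt_bound v i
  rw [desB_eq_card, desB_eq_card, Finset.card_filter, Finset.card_filter,
    Fin.sum_univ_succAbove _ q.castSucc]
  have hprev : -((m : ℤ) + 1) < prevL (insW v q.castSucc b) q.castSucc ∧
      prevL (insW v q.castSucc b) q.castSucc < (m : ℤ) + 1 := by
    unfold prevL
    rcases Nat.eq_zero_or_pos (q : ℕ) with h | h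
    · rw [if_pos (by simpa using h)]
      constructor <;> (push_cast; omega)
    · rw [if_neg (by simp; omega)]
      rw [letterW_insW_lt v _ _ _ (by simp; omega) (by simp; omega)]
      exact ⟨(hvb _).2, (hvb _).1⟩
  have hfp : (if letterW (insW v q.castSucc b) q.castSucc <
      prevL (insW v q.castSucc b) q.castSucc then (1 : ℕ) else 0) = if b then 0 else 1 := by
    rw [letterW_insW_eq]
    rcases b with _ | _
    · simp only [Bool.false_eq_true, if_false, if_pos hprev.1]
    · simp only [if_true, if_neg (not_lt.mpr hprev.2.le)]
  have hclaim : ∀ i : Fin m,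
      (if letterW (insW v q.castSucc b) (q.castSucc.succAbove i) <
          prevL (insW v q.castSucc b) (q.castSucc.succAbove i) then (1 : ℕ) else 0)
      = if i = q then (if b then 1 else 0)
        else (if letterW v i < prevL v i then 1 else 0) := by
    intro i
    rcases lt_trichotomy (i : ℕ) (q : ℕ) with hlt | heq | hgt
    · have hne : i ≠ q := fun h => by rw [h] at hlt; omega
      have hs : q.castSucc.succAbove i = i.castSucc :=
        Fin.succAbove_of_castSucc_lt _ _ (by rw [Fin.lt_def]; simpa using hlt)
      rw [hs, if_neg hne]
      simp only [descent_iff_insW_low v q.castSucc b i (by simpa using hlt)]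
    · have heq' : i = q := Fin.ext heq
      subst heq'
      rw [if_pos rfl]
      have hs : i.castSucc.succAbove i = i.succ :=
        Fin.succAbove_of_le_castSucc _ _ le_rfl
      rw [hs]
      have h1 : letterW (insW v i.castSucc b) i.succ = letterW v i := by
        rw [letterW_insW_gt v _ b _ (by simp [Fin.val_succ]) (by simp only [Fin.val_succ, Fin.coe_castSucc]; omega)]
        all_goals exact congrArg _ (Fin.ext (by simp))
      have h2 : prevL (insW v i.castSucc b) i.succ =
          (if b then ((m : ℤ) + 1) else -((m : ℤ) + 1)) := by
        unfold prevL
        rw [if_neg (by simp [Fin.val_succ])]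
        have hmk : (⟨((i.succ : Fin (m + 1)) : ℕ) - 1, by simp [Fin.val_succ]⟩ :
            Fin (m + 1)) = i.castSucc := Fin.ext (by simp)
        rw [hmk, letterW_insW_eq]
      rw [h1, h2]
      rcases b with _ | _
      · simp only [Bool.false_eq_true, if_false, if_neg (not_lt.mpr (hvb i).2.le)]
      · simp only [if_true, if_pos (hvb i).1]
    · have hne : i ≠ q := fun h => by rw [h] at hgt; omega
      have hs : q.castSucc.succAbove i = i.succ :=
        Fin.succAbove_of_le_castSucc _ _ (by rw [Fin.le_def]; simp only [Fin.coe_castSucc]; omega)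
      rw [hs, if_neg hne]
      have h1 : letterW (insW v q.castSucc b) i.succ = letterW v i := by
        rw [letterW_insW_gt v _ b _ (by simp only [Fin.val_succ, Fin.coe_castSucc]; omega)
          (by simp only [Fin.val_succ, Fin.coe_castSucc]; omega)]
        all_goals exact congrArg _ (Fin.ext (by simp))
      have h2 : prevL (insW v q.castSucc b) i.succ = prevL v i := by
        unfold prevL
        rw [if_neg (by simp [Fin.val_succ]), if_neg (by omega)]
        rw [letterW_insW_gt v _ b _ (by simp only [Fin.val_succ, Fin.coe_castSucc]; omega)
          (by simp only [Fin.val_succ, Fin.coe_castSucc]; omega)]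
        all_goals exact congrArg _ (Fin.ext (by simp [Fin.val_succ]))
      rw [h1, h2]
  rw [hfp, Finset.sum_congr rfl (fun i _ => hclaim i)]
  have hsplit : ∑ i : Fin m, (if i = q then (if b then (1 : ℕ) else 0)
      else (if letterW v i < prevL v i then 1 else 0))
      = (if b then 1 else 0) +
        ∑ i ∈ univ.erase q, (if letterW v i < prevL v i then 1 else 0) := by
    rw [← Finset.add_sum_erase _ _ (mem_univ q), if_pos rfl]
    congr 1
    exact Finset.sum_congr rfl (fun i hi => if_neg (Finset.ne_of_mem_erase hi))
  have hv : ∑ i : Fin m, (if letterW v i < prevL v i then (1 : ℕ) else 0)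
      = (if letterW v q < prevL v q then 1 else 0) +
        ∑ i ∈ univ.erase q, (if letterW v i < prevL v i then 1 else 0) :=
    (Finset.add_sum_erase _ _ (mem_univ q)).symm
  rw [hsplit, hv]
  by_cases hc : letterW v q < prevL v q <;> rcases b with _ | _ <;> simp [hc] <;> omega

noncomputable def maxPos (u : Fin (m + 1) → Fin (m + 1) × Bool) : Fin (m + 1) :=
  if h : ∃ j, (u j).1 = Fin.last m then h.choose else 0

lemma maxPos_eq {u : Fin (m + 1) → Fin (m + 1) × Bool}
    (hu : Function.Injective fun j => (u j).1) {p : Fin (m + 1)}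
    (hp : (u p).1 = Fin.last m) : maxPos u = p := by
  have h : ∃ j, (u j).1 = Fin.last m := ⟨p, hp⟩
  rw [maxPos, dif_pos h]
  exact hu (h.choose_spec.trans hp.symm)

lemma maxPos_spec {u : Fin (m + 1) → Fin (m + 1) × Bool}
    (h : ∃ j, (u j).1 = Fin.last m) : (u (maxPos u)).1 = Fin.last m := by
  rw [maxPos, dif_pos h]
  exact h.choose_spec

lemma maxPos_spec' {u : Fin (m + 1) → Fin (m + 1) × Bool} (hu : IsSP u) :
    (u (maxPos u)).1 = Fin.last m :=
  maxPos_spec (hu.surjective (Fin.last m))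

lemma fiber_last :
    ∑ u ∈ (univ.filter fun u : Fin (m + 1) → Fin (m + 1) × Bool =>
        IsSP u ∧ 0 < letterW u (Fin.last m)).filter (fun u => maxPos u = Fin.last m),
      (X : Polynomial ℝ) ^ desB u
    = ∑ v ∈ univ.filter (fun v : Fin m → Fin m × Bool => IsSP v),
        (X : Polynomial ℝ) ^ desB v := by
  refine Finset.sum_nbij' (fun u => delW u (Fin.last m))
    (fun v => insW v (Fin.last m) true) ?_ ?_ ?_ ?_ ?_
  · intro u hu
    rw [mem_filter] at hu
    obtain ⟨hu1, hmax⟩ := hu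
    rw [mem_filter] at hu1
    obtain ⟨-, hsp, hpos⟩ := hu1
    have hp : (u (Fin.last m)).1 = Fin.last m := by
      have h' := maxPos_spec' hsp
      rw [hmax] at h'
      exact h'
    exact mem_filter.mpr ⟨mem_univ _, IsSP_delW hsp hp⟩
  · intro v hv
    rw [mem_filter] at hv
    obtain ⟨-, hv⟩ := hv
    have hsp := IsSP_insW hv (Fin.last m) true
    have hfst : (insW v (Fin.last m) true (Fin.last m)).1 = Fin.last m := by
      rw [insW_apply_eq]
    refine mem_filter.mpr ⟨mem_filter.mpr ⟨mem_univ _, hsp, ?_⟩, maxPos_eq hsp.injective hfst⟩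
    rw [letterW_insW_eq, if_pos rfl]
    positivity
  · intro u hu
    rw [mem_filter] at hu
    obtain ⟨hu1, hmax⟩ := hu
    rw [mem_filter] at hu1
    obtain ⟨-, hsp, hpos⟩ := hu1
    have hp : (u (Fin.last m)).1 = Fin.last m := by
      have h' := maxPos_spec' hsp
      rw [hmax] at h'
      exact h'
    have h2 : (u (Fin.last m)).2 = true := (letterW_pos_iff u _).mp hpos
    have := insW_delW hsp.injective hp
    rw [h2] at this
    exact this
  · intro v _
    exact delW_insW v (Fin.last m) true
  · intro u hu
    rw [mem_filter] at hu
    obtain ⟨hu1, hmax⟩ := hu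
    rw [mem_filter] at hu1
    obtain ⟨-, hsp, hpos⟩ := hu1
    have hp : (u (Fin.last m)).1 = Fin.last m := by
      have h' := maxPos_spec' hsp
      rw [hmax] at h'
      exact h'
    have h2 : (u (Fin.last m)).2 = true := (letterW_pos_iff u _).mp hpos
    have hins : insW (delW u (Fin.last m)) (Fin.last m) true = u := by
      have := insW_delW hsp.injective hp
      rw [h2] at this
      exact this
    congr 1
    conv_lhs => rw [← hins]
    exact desB_insW_last (delW u (Fin.last m))

lemma fiber_mid (q : Fin m) :
    ∑ u ∈ (univ.filter fun u : Fin (m + 1) → Fin (m + 1) × Bool =>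
        IsSP u ∧ 0 < letterW u (Fin.last m)).filter (fun u => maxPos u = q.castSucc),
      (X : Polynomial ℝ) ^ desB u
    = ∑ vb ∈ (univ.filter (fun v : Fin m → Fin m × Bool =>
          IsSP v ∧ ∀ i : Fin m, (i : ℕ) = m - 1 → 0 < letterW v i)) ×ˢ
        (univ : Finset Bool),
        (X : Polynomial ℝ) ^
          (desB vb.1 + (if letterW vb.1 q < prevL vb.1 q then 0 else 1)) := by
  have hq := q.isLt
  have hm : 0 < m := by omega
  refine Finset.sum_nbij' (fun u => (delW u q.castSucc, (u q.castSucc).2))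
    (fun vb => insW vb.1 q.castSucc vb.2) ?_ ?_ ?_ ?_ ?_
  · intro u hu
    rw [mem_filter] at hu
    obtain ⟨hu1, hmax⟩ := hu
    rw [mem_filter] at hu1
    obtain ⟨-, hsp, hpos⟩ := hu1
    have hp : (u q.castSucc).1 = Fin.last m := by
      rw [← hmax]; exact maxPos_spec' hsp
    refine mem_product.mpr ⟨mem_filter.mpr ⟨mem_univ _, IsSP_delW hsp hp, ?_⟩, mem_univ _⟩
    intro i hi
    have hs : q.castSucc.succAbove i = Fin.last m := by
      rw [Fin.succAbove_of_le_castSucc _ _ (by rw [Fin.le_def]; simp; omega)]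
      exact Fin.ext (by simp [Fin.val_succ, Fin.val_last]; omega)
    have h22 : (delW u q.castSucc i).2 = (u (q.castSucc.succAbove i)).2 := by
      rw [delW_eq_succAbove]
    rw [letterW_pos_iff]
    show (delW u q.castSucc i).2 = true
    rw [h22, hs]
    exact (letterW_pos_iff u _).mp hpos
  · intro vb hvb
    rw [mem_product, mem_filter] at hvb
    obtain ⟨⟨-, hsp, hvpos⟩, -⟩ := hvb
    have hsp' := IsSP_insW hsp q.castSucc vb.2
    have hfst : (insW vb.1 q.castSucc vb.2 q.castSucc).1 = Fin.last m := by
      rw [insW_apply_eq]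
    refine mem_filter.mpr ⟨mem_filter.mpr ⟨mem_univ _, hsp', ?_⟩,
      maxPos_eq hsp'.injective hfst⟩
    rw [letterW_insW_gt vb.1 _ _ _ (by simp only [Fin.coe_castSucc, Fin.val_last]; omega)
      (by simp only [Fin.val_last]; omega)]
    exact hvpos _ (by simp [Fin.val_last])
  · intro u hu
    rw [mem_filter] at hu
    obtain ⟨hu1, hmax⟩ := hu
    rw [mem_filter] at hu1
    obtain ⟨-, hsp, hpos⟩ := hu1
    have hp : (u q.castSucc).1 = Fin.last m := by
      rw [← hmax]; exact maxPos_spec' hsp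
    exact insW_delW hsp.injective hp
  · intro vb _
    refine Prod.ext ?_ ?_
    · exact delW_insW vb.1 q.castSucc vb.2
    · show (insW vb.1 q.castSucc vb.2 q.castSucc).2 = vb.2
      rw [insW_apply_eq]
  · intro u hu
    rw [mem_filter] at hu
    obtain ⟨hu1, hmax⟩ := hu
    rw [mem_filter] at hu1
    obtain ⟨-, hsp, hpos⟩ := hu1
    have hp : (u q.castSucc).1 = Fin.last m := by
      rw [← hmax]; exact maxPos_spec' hsp
    have hins : insW (delW u q.castSucc) q.castSucc (u q.castSucc).2 = u :=
      insW_delW hsp.injective hp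
    congr 1
    conv_lhs => rw [← hins]
    exact desB_insW_mid (delW u q.castSucc) q (u q.castSucc).2

lemma innerSumX (v : Fin m → Fin m × Bool) :
    ∑ q : Fin m, (X : Polynomial ℝ) ^
        (desB v + (if letterW v q < prevL v q then 0 else 1))
    = desB v • (X : Polynomial ℝ) ^ desB v +
      (m - desB v) • (X : Polynomial ℝ) ^ (desB v + 1) := by
  rw [← Finset.sum_filter_add_sum_filter_not univ (fun q => letterW v q < prevL v q)]
  congr 1
  · rw [Finset.sum_congr rfl (fun q hq => by
      rw [if_pos (mem_filter.mp hq).2, Nat.add_zero]), Finset.sum_const]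
    rw [← desB_eq_card]
  · rw [Finset.sum_congr rfl (fun q hq => by
      rw [if_neg (mem_filter.mp hq).2]), Finset.sum_const]
    congr 1
    have h1 : desB v +
        (univ.filter fun q : Fin m => ¬ letterW v q < prevL v q).card = m := by
      rw [desB_eq_card]
      rw [Finset.card_filter_add_card_filter_not]
      simp
    omega

lemma poly_alg (mm k : ℕ) (hk : k ≤ mm) :
    (2 : Polynomial ℝ) * (k • (X : Polynomial ℝ) ^ k +
        (mm - k) • (X : Polynomial ℝ) ^ (k + 1))
    = ((2 * mm : ℕ) : Polynomial ℝ) * X * X ^ k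
      + 2 * X * (1 - X) * derivative ((X : Polynomial ℝ) ^ k) := by
  rw [derivative_X_pow]
  rcases k with _ | k'
  · simp
    push_cast
    ring
  · simp only [nsmul_eq_mul, map_natCast, Nat.add_sub_cancel]
    push_cast [Nat.cast_sub hk]
    ring

end Aux

lemma sumP_eq_Bplus (k : ℕ) :
    ∑ v ∈ univ.filter (fun v : Fin (k + 1) → Fin (k + 1) × Bool =>
        IsSP v ∧ ∀ i : Fin (k + 1), (i : ℕ) = (k + 1) - 1 → 0 < letterW v i),
      (X : Polynomial ℝ) ^ desB v = Bplus (k + 1) := by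
  rw [Bplus]
  congr 1
  apply filter_congr
  intro v _
  simp only [Nat.add_sub_cancel]
  constructor
  · rintro ⟨h1, h2⟩
    exact ⟨h1, h2 (Fin.last k) (Fin.val_last k)⟩
  · rintro ⟨h1, h2⟩
    refine ⟨h1, fun i hi => ?_⟩
    have hi' : i = Fin.last k := Fin.ext (by simp [Fin.val_last, hi])
    rw [hi']
    exact h2


/-- For `n ≥ 1`,
`B_n^+(x) = 2(n−1)x B_{n−1}^+(x) + 2x(1−x) (B_{n−1}^+)'(x) + B_{n−1}(x)`. -/
theorem Bplus_recurrence (n : ℕ) (hn : 1 ≤ n) :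
    Bplus n = ((2 * (n - 1) : ℕ) : Polynomial ℝ) * X * Bplus (n - 1)
        + 2 * X * (1 - X) * Polynomial.derivative (Bplus (n - 1))
        + Bpoly (n - 1) := by
  obtain ⟨m, rfl⟩ : ∃ m, n = m + 1 := ⟨n - 1, by omega⟩
  simp only [Nat.add_sub_cancel]
  have hLHS : Bplus (m + 1) = ∑ p : Fin (m + 1),
      ∑ u ∈ (univ.filter fun u : Fin (m + 1) → Fin (m + 1) × Bool =>
          IsSP u ∧ 0 < letterW u (Fin.last m)).filter (fun u => maxPos u = p),
        (X : Polynomial ℝ) ^ desB u := by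
    rw [Bplus]
    exact (Finset.sum_fiberwise_of_maps_to (fun u _ => mem_univ (maxPos u)) _).symm
  rw [hLHS, Fin.sum_univ_castSucc, fiber_last]
  have hBpoly : ∑ v ∈ univ.filter (fun v : Fin m → Fin m × Bool => IsSP v),
      (X : Polynomial ℝ) ^ desB v = Bpoly m := by
    rw [Bpoly]
  rw [hBpoly]
  congr 1
  rw [Finset.sum_congr rfl (fun q _ => fiber_mid q)]
  rcases m with _ | k
  · simp [Bplus]
  · calc
      ∑ q : Fin (k + 1), ∑ vb ∈ (univ.filter (fun v : Fin (k+1) → Fin (k+1) × Bool =>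
            IsSP v ∧ ∀ i : Fin (k+1), (i : ℕ) = (k+1) - 1 → 0 < letterW v i)) ×ˢ
          (univ : Finset Bool),
          (X : Polynomial ℝ) ^ (desB vb.1 + (if letterW vb.1 q < prevL vb.1 q then 0 else 1))
        = ∑ q : Fin (k + 1), ∑ v ∈ univ.filter (fun v : Fin (k+1) → Fin (k+1) × Bool =>
            IsSP v ∧ ∀ i : Fin (k+1), (i : ℕ) = (k+1) - 1 → 0 < letterW v i),
            (2 : Polynomial ℝ) * (X : Polynomial ℝ) ^
              (desB v + (if letterW v q < prevL v q then 0 else 1)) := by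
          refine Finset.sum_congr rfl (fun q _ => ?_)
          rw [Finset.sum_product]
          refine Finset.sum_congr rfl (fun v _ => ?_)
          simp [two_smul, two_mul]
      _ = ∑ v ∈ univ.filter (fun v : Fin (k+1) → Fin (k+1) × Bool =>
            IsSP v ∧ ∀ i : Fin (k+1), (i : ℕ) = (k+1) - 1 → 0 < letterW v i),
            (2 : Polynomial ℝ) * (desB v • (X : Polynomial ℝ) ^ desB v +
              ((k+1) - desB v) • (X : Polynomial ℝ) ^ (desB v + 1)) := by
          rw [Finset.sum_comm]
          refine Finset.sum_congr rfl (fun v _ => ?_)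
          rw [← Finset.mul_sum, innerSumX]
      _ = ∑ v ∈ univ.filter (fun v : Fin (k+1) → Fin (k+1) × Bool =>
            IsSP v ∧ ∀ i : Fin (k+1), (i : ℕ) = (k+1) - 1 → 0 < letterW v i),
            (((2 * (k+1) : ℕ) : Polynomial ℝ) * X * X ^ desB v
              + 2 * X * (1 - X) * derivative ((X : Polynomial ℝ) ^ desB v)) := by
          refine Finset.sum_congr rfl (fun v _ => ?_)
          exact poly_alg (k+1) (desB v) (desB_le v)
      _ = ((2 * (k+1) : ℕ) : Polynomial ℝ) * X * Bplus (k+1)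
            + 2 * X * (1 - X) * Polynomial.derivative (Bplus (k+1)) := by
          rw [Finset.sum_add_distrib, ← Finset.mul_sum, ← Finset.mul_sum, ← map_sum,
            sumP_eq_Bplus]
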